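/- Let a_1, …, a_k, b_1, …, b_k be positive real numbers such that a_i b_j − a_j b_i > 0 for all 1 ≤ i < j ≤ k. For 1 ≤ i ≤ k let L_i(x_1, …, x_k) = a_i + a_i(x_1 + ⋯ + x_{i−1}) − b_i(x_i + ⋯ + x_k), and let P ⊆ ℝ^k be the set of points satisfying L_i(x) ≥ 0 and x_i ≥ 0 for all 1 ≤ i ≤ k. Then P is a bounded convex set with nonempty interior, and for each subset I ⊆ {1, …, k} the linear system {L_i(x) = 0 for i ∈ I, x_j = 0 for j ∈ {1, …, k} ∖ I} has a unique solution, which lies in P and is an extreme point of P; moreover, as I ranges over all 2^k subsets of {1, …, k}, these solutions are pairwise distinct and exhaust all extreme points of P. -/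

import Mathlib

/-- The affine form `L_i(x) = a_i + a_i (x_1 + ⋯ + x_{i-1}) - b_i (x_i + ⋯ + x_k)`. -/
def Lab (k : ℕ) (a b : Fin k → ℝ) (i : Fin k) (x : Fin k → ℝ) : ℝ :=
  a i + a i * (∑ t ∈ Finset.Iio i, x t) - b i * (∑ t ∈ Finset.Ici i, x t)

/-- The polyhedral set `P` defined by `L_i(x) ≥ 0` and `x_i ≥ 0` for all `i`. -/
def Pab (k : ℕ) (a b : Fin k → ℝ) : Set (Fin k → ℝ) :=
  {x | ∀ i, 0 ≤ x i ∧ 0 ≤ Lab k a b i x}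

open Finset

namespace PabAux

lemma sum_val_Ici {k : ℕ} (i : Fin k) (g : ℕ → ℝ) :
    ∑ t ∈ Finset.Ici i, g t.val = ∑ m ∈ Finset.Ico i.val k, g m := by
  classical
  have h1 : Finset.Ici i = Finset.univ.filter (fun t : Fin k => i.val ≤ t.val) := by
    ext t
    simp only [Finset.mem_Ici, Finset.mem_filter, Finset.mem_univ, true_and, Fin.le_def]
  have h2 : Finset.Ico i.val k = (Finset.range k).filter (fun m => i.val ≤ m) := by
    ext m
    simp only [Finset.mem_Ico, Finset.mem_filter, Finset.mem_range]
    omega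
  rw [h1, h2, Finset.sum_filter, Finset.sum_filter,
    ← Fin.sum_univ_eq_sum_range (fun m => if i.val ≤ m then g m else 0) k]

lemma sum_Ico_tele {k : ℕ} (g : ℕ → ℝ) {n : ℕ} (h : n ≤ k) :
    ∑ m ∈ Finset.Ico n k, (g m - g (m+1)) = g n - g k := by
  rw [Finset.sum_Ico_eq_sum_range]
  have h0 := Finset.sum_range_sub' (fun i => g (n + i)) (k - n)
  simp only [Nat.add_zero] at h0
  rw [show n + (k - n) = k from by omega] at h0
  rw [← h0]
  exact Finset.sum_congr rfl fun m _ => by rw [Nat.add_assoc]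

lemma sum_Ici_split {k : ℕ} (x : Fin k → ℝ) (i : Fin k) :
    ∑ t ∈ Finset.Ici i, x t = x i + ∑ t ∈ Finset.Ioi i, x t := by
  rw [Finset.Ici_eq_cons_Ioi, Finset.sum_cons]

lemma Lab_eq (k : ℕ) (a b : Fin k → ℝ) (i : Fin k) (x : Fin k → ℝ) :
    Lab k a b i x
      = a i * (1 + ∑ t, x t) - (a i + b i) * ∑ t ∈ Finset.Ici i, x t := by
  have h1 : Finset.Iio i = (Finset.Ici i)ᶜ := by ext t; simp
  have h2 : ∑ t ∈ Finset.Iio i, x t = (∑ t, x t) - ∑ t ∈ Finset.Ici i, x t := by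
    rw [h1, eq_sub_iff_add_eq, Finset.sum_compl_add_sum]
  rw [Lab, h2]; ring

/-- linear part of Lab -/
lemma Lab_add_smul (k : ℕ) (a b : Fin k → ℝ) (i : Fin k) (x d : Fin k → ℝ) (e : ℝ) :
    Lab k a b i (x + e • d)
      = Lab k a b i x + e * (a i * (∑ t, d t) - (a i + b i) * ∑ t ∈ Finset.Ici i, d t) := by
  rw [Lab_eq, Lab_eq]
  simp only [Pi.add_apply, Pi.smul_apply, smul_eq_mul, Finset.sum_add_distrib,
    ← Finset.mul_sum]
  ring

lemma Lab_combo (k : ℕ) (a b : Fin k → ℝ) (i : Fin k) (x y : Fin k → ℝ) {θ η : ℝ}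
    (h : θ + η = 1) :
    Lab k a b i (θ • x + η • y) = θ * Lab k a b i x + η * Lab k a b i y := by
  rw [Lab_eq, Lab_eq, Lab_eq]
  simp only [Pi.add_apply, Pi.smul_apply, smul_eq_mul, Finset.sum_add_distrib,
    ← Finset.mul_sum]
  have : η = 1 - θ := by linarith
  subst this
  ring

noncomputable def cc {k : ℕ} (a b : Fin k → ℝ) (i : Fin k) : ℝ := a i / (a i + b i)

noncomputable def Wmin {k : ℕ} (a b : Fin k → ℝ) (s : Finset (Fin k)) : ℝ :=
  if h : s.Nonempty then cc a b (s.min' h) else 0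

noncomputable def Vn {k : ℕ} (a b : Fin k → ℝ) (I : Finset (Fin k)) (n : ℕ) : ℝ :=
  Wmin a b (I.filter (fun t => n ≤ t.val))

noncomputable def rho {k : ℕ} (a b : Fin k → ℝ) (I : Finset (Fin k)) : ℝ :=
  1 / (1 - Vn a b I 0)

noncomputable def solF {k : ℕ} (a b : Fin k → ℝ) (I : Finset (Fin k)) : Fin k → ℝ :=
  fun i => (Vn a b I i.val - Vn a b I (i.val + 1)) * rho a b I

section basic
variable {k : ℕ} {a b : Fin k → ℝ} (ha : ∀ i, 0 < a i) (hb : ∀ i, 0 < b i)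
  (hab : ∀ i j : Fin k, i < j → 0 < a i * b j - a j * b i)

include ha hb

lemma cc_pos (i : Fin k) : 0 < cc a b i := by
  have := ha i; have := hb i; rw [cc]; positivity

lemma cc_lt_one (i : Fin k) : cc a b i < 1 := by
  have := ha i; have := hb i
  rw [cc, div_lt_one (by linarith)]; linarith

include hab in
lemma cc_anti {i j : Fin k} (hij : i < j) : cc a b j < cc a b i := by
  have h1 := ha i; have h2 := hb i; have h3 := ha j; have h4 := hb j
  have h5 := hab i j hij
  rw [cc, cc, div_lt_div_iff₀ (by linarith) (by linarith)]
  nlinarith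

include hab in
lemma cc_anti_le {i j : Fin k} (hij : i ≤ j) : cc a b j ≤ cc a b i := by
  rcases eq_or_lt_of_le hij with h | h
  · subst h; exact le_refl _
  · exact le_of_lt (cc_anti ha hb hab h)

lemma Wmin_nonneg (s : Finset (Fin k)) : 0 ≤ Wmin a b s := by
  rw [Wmin]; split
  · exact le_of_lt (cc_pos ha hb _)
  · exact le_refl _

lemma Wmin_lt_one (s : Finset (Fin k)) : Wmin a b s < 1 := by
  rw [Wmin]; split
  · exact cc_lt_one ha hb _
  · norm_num

lemma Vn_nonneg (I : Finset (Fin k)) (n : ℕ) : 0 ≤ Vn a b I n := Wmin_nonneg ha hb _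

lemma Vn_lt_one (I : Finset (Fin k)) (n : ℕ) : Vn a b I n < 1 := Wmin_lt_one ha hb _

include hab in
lemma Wmin_mono {s s' : Finset (Fin k)} (hss : s ⊆ s') : Wmin a b s ≤ Wmin a b s' := by
  rw [Wmin, Wmin]
  split
  · rename_i hs
    rw [dif_pos (hs.mono hss)]
    exact cc_anti_le ha hb hab (Finset.min'_subset hs hss)
  · exact Wmin_nonneg ha hb _

end basic

section vn
variable {k : ℕ} {a b : Fin k → ℝ} (ha : ∀ i, 0 < a i) (hb : ∀ i, 0 < b i)
  (hab : ∀ i j : Fin k, i < j → 0 < a i * b j - a j * b i)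
variable (I : Finset (Fin k))

lemma Vn_zero_of_ge {n : ℕ} (h : k ≤ n) : Vn a b I n = 0 := by
  rw [Vn, Wmin, dif_neg]
  rintro ⟨t, ht⟩
  rw [Finset.mem_filter] at ht
  have := t.isLt
  omega

lemma Vn_mem {i : Fin k} (hi : i ∈ I) : Vn a b I i.val = cc a b i := by
  have hne : (I.filter (fun t => i.val ≤ t.val)).Nonempty :=
    ⟨i, Finset.mem_filter.2 ⟨hi, le_refl _⟩⟩
  rw [Vn, Wmin, dif_pos hne]
  congr 1
  apply le_antisymm
  · exact Finset.min'_le _ _ (Finset.mem_filter.2 ⟨hi, le_refl _⟩)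
  · rw [Fin.le_def]
    exact (Finset.mem_filter.1 (Finset.min'_mem _ hne)).2

lemma Vn_notmem {i : Fin k} (hi : i ∉ I) : Vn a b I i.val = Vn a b I (i.val + 1) := by
  rw [Vn, Vn]
  congr 1
  ext t
  simp only [Finset.mem_filter, and_congr_right_iff]
  intro ht
  constructor
  · intro h
    rcases Nat.eq_or_lt_of_le h with h' | h'
    · exfalso; apply hi; have : i = t := Fin.ext h'; rw [this]; exact ht
    · omega
  · omega

include ha hb hab in
lemma Vn_antitone (n : ℕ) : Vn a b I (n + 1) ≤ Vn a b I n := by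
  apply Wmin_mono ha hb hab
  apply Finset.monotone_filter_right
  intro t ht
  omega

include ha hb hab in
lemma Vn_le_cc (i : Fin k) : Vn a b I i.val ≤ cc a b i := by
  rw [Vn, Wmin]
  split
  · rename_i hne
    apply cc_anti_le ha hb hab
    rw [Fin.le_def]
    exact (Finset.mem_filter.1 (Finset.min'_mem _ hne)).2
  · exact le_of_lt (cc_pos ha hb i)

include ha hb hab in
lemma Vn_lt_cc {i : Fin k} (hi : i ∉ I) : Vn a b I i.val < cc a b i := by
  rw [Vn, Wmin]
  split
  · rename_i hne
    apply cc_anti ha hb hab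
    have hm := Finset.mem_filter.1 (Finset.min'_mem _ hne)
    rw [Fin.lt_def]
    rcases Nat.eq_or_lt_of_le hm.2 with h' | h'
    · exfalso; apply hi
      have : i = (I.filter (fun t => i.val ≤ t.val)).min' hne := Fin.ext h'
      rw [this]; exact hm.1
    · exact h'
  · exact cc_pos ha hb i

include ha hb in
lemma rho_pos : 0 < rho a b I := by
  rw [rho]
  have h := Vn_lt_one ha hb I 0
  have : 0 < 1 - Vn a b I 0 := by linarith
  positivity

include ha hb in
lemma rho_eq : rho a b I = 1 + Vn a b I 0 * rho a b I := by
  have h1 := Vn_lt_one ha hb I 0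
  have h2 : 1 - Vn a b I 0 ≠ 0 := by linarith
  rw [rho]
  field_simp
  ring

end vn

section sol
variable {k : ℕ} {a b : Fin k → ℝ} (ha : ∀ i, 0 < a i) (hb : ∀ i, 0 < b i)
  (hab : ∀ i j : Fin k, i < j → 0 < a i * b j - a j * b i)
variable (I : Finset (Fin k))

lemma U_sol (i : Fin k) :
    ∑ t ∈ Finset.Ici i, solF a b I t = Vn a b I i.val * rho a b I := by
  have h1 := sum_val_Ici i (fun m => (Vn a b I m - Vn a b I (m+1)) * rho a b I)
  have hz : Vn a b I k = 0 := Vn_zero_of_ge I (le_refl k)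
  rw [show (∑ t ∈ Finset.Ici i, solF a b I t)
      = ∑ t ∈ Finset.Ici i, (Vn a b I t.val - Vn a b I (t.val+1)) * rho a b I from rfl,
    h1, ← Finset.sum_mul, sum_Ico_tele (Vn a b I) (le_of_lt i.isLt), hz, sub_zero]

lemma T_sol : ∑ t, solF a b I t = Vn a b I 0 * rho a b I := by
  have h1 := Fin.sum_univ_eq_sum_range (fun m => (Vn a b I m - Vn a b I (m+1)) * rho a b I) k
  have hz : Vn a b I k = 0 := Vn_zero_of_ge I (le_refl k)
  rw [show (∑ t, solF a b I t)
      = ∑ t : Fin k, (Vn a b I t.val - Vn a b I (t.val+1)) * rho a b I from rfl,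
    h1, Finset.range_eq_Ico, ← Finset.sum_mul, sum_Ico_tele (Vn a b I) (Nat.zero_le k),
    hz, sub_zero]

include ha hb in
lemma Lab_sol (i : Fin k) :
    Lab k a b i (solF a b I)
      = rho a b I * (a i + b i) * (cc a b i - Vn a b I i.val) := by
  have h2 : a i + b i ≠ 0 := by have := ha i; have := hb i; linarith
  have hr : a i * (1 + Vn a b I 0 * rho a b I) = a i * rho a b I := by
    rw [← rho_eq ha hb]
  rw [Lab_eq, T_sol, U_sol, hr, cc]
  field_simp

include ha hb hab in
lemma sol_mem : solF a b I ∈ Pab k a b := by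
  intro i
  constructor
  · apply mul_nonneg _ (le_of_lt (rho_pos ha hb I))
    have := Vn_antitone ha hb hab I i.val
    linarith
  · rw [Lab_sol ha hb]
    apply mul_nonneg (mul_nonneg (le_of_lt (rho_pos ha hb I)) (by have := ha i; have := hb i; linarith))
    have h4 := Vn_le_cc ha hb hab I i
    linarith

include ha hb in
lemma sol_Lab_zero {i : Fin k} (hi : i ∈ I) : Lab k a b i (solF a b I) = 0 := by
  rw [Lab_sol ha hb, Vn_mem I hi, sub_self, mul_zero]

include ha hb hab in
lemma sol_Lab_pos {i : Fin k} (hi : i ∉ I) : 0 < Lab k a b i (solF a b I) := by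
  rw [Lab_sol ha hb]
  apply mul_pos (mul_pos (rho_pos ha hb I) (by have := ha i; have := hb i; linarith))
  have h4 := Vn_lt_cc ha hb hab I hi
  linarith

lemma sol_zero {j : Fin k} (hj : j ∉ I) : solF a b I j = 0 := by
  rw [show solF a b I j = (Vn a b I j.val - Vn a b I (j.val+1)) * rho a b I from rfl,
    ← Vn_notmem I hj, sub_self, zero_mul]

include ha hb in
lemma sol_unique (x : Fin k → ℝ) (h1 : ∀ i ∈ I, Lab k a b i x = 0)
    (h2 : ∀ j ∉ I, x j = 0) : x = solF a b I := by
  set T := ∑ t, x t with hT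
  have key : ∀ m : ℕ, ∀ i : Fin k, k ≤ i.val + m →
      ∑ t ∈ Finset.Ici i, x t = Vn a b I i.val * (1 + T) := by
    intro m
    induction m with
    | zero => intro i hik; exact absurd i.isLt (by omega)
    | succ m ih =>
      intro i hik
      by_cases hi : i ∈ I
      · have h3 := h1 i hi
        rw [Lab_eq] at h3
        have h4 := ha i; have h5 := hb i
        rw [Vn_mem I hi, cc]
        rw [div_mul_eq_mul_div, eq_div_iff (by linarith)]
        linarith
      · rw [sum_Ici_split, h2 i hi, zero_add, Vn_notmem I hi]
        by_cases hlast : i.val + 1 = k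
        · have he : Finset.Ioi i = ∅ := by
            ext t
            simp only [Finset.mem_Ioi, Finset.notMem_empty, iff_false, Fin.lt_def]
            have := t.isLt; omega
          have hz : Vn a b I (i.val + 1) = 0 := Vn_zero_of_ge I (by omega)
          rw [he, Finset.sum_empty, hz, zero_mul]
        · have hi'lt : i.val + 1 < k := by have := i.isLt; omega
          have hIoi : Finset.Ioi i = Finset.Ici (⟨i.val + 1, hi'lt⟩ : Fin k) := by
            ext t
            simp only [Finset.mem_Ioi, Finset.mem_Ici, Fin.lt_def, Fin.le_def]
            exact ⟨fun h => h, fun h => h⟩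
          have hih := ih ⟨i.val + 1, hi'lt⟩ (by show k ≤ i.val + 1 + m; omega)
          rw [hIoi, hih]
  have hTval : 1 + T = rho a b I := by
    by_cases hk : k = 0
    · subst hk
      have hT0 : T = 0 := by rw [hT]; simp
      have hV0 : Vn a b I 0 = 0 := Vn_zero_of_ge I (le_refl 0)
      rw [hT0, rho, hV0]; norm_num
    · have hk0 : 0 < k := Nat.pos_of_ne_zero hk
      have huniv : Finset.Ici (⟨0, hk0⟩ : Fin k) = Finset.univ := by
        ext t; simp [Fin.le_def]
      have hT0 : T = Vn a b I 0 * (1 + T) := by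
        have h5 := key k ⟨0, hk0⟩ (by show k ≤ 0 + k; omega)
        rw [huniv] at h5
        exact h5
      have hlt := Vn_lt_one ha hb I 0
      have hne : (1:ℝ) - Vn a b I 0 ≠ 0 := by linarith
      rw [rho, eq_div_iff hne]
      nlinarith [hT0]
  funext i
  have hUi := key k i (by have := i.isLt; omega)
  show x i = (Vn a b I i.val - Vn a b I (i.val+1)) * rho a b I
  by_cases hlast : i.val + 1 = k
  · have he : Finset.Ici i = {i} := by
      ext t
      simp only [Finset.mem_Ici, Finset.mem_singleton, Fin.le_def]
      have := t.isLt
      constructor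
      · intro h; exact Fin.ext (by omega)
      · intro h; rw [h]
    rw [he, Finset.sum_singleton] at hUi
    have hz : Vn a b I (i.val + 1) = 0 := Vn_zero_of_ge I (by omega)
    rw [hUi, hz, hTval, sub_zero]
  · have hi'lt : i.val + 1 < k := by have := i.isLt; omega
    have hUi' := key k ⟨i.val + 1, hi'lt⟩ (by show k ≤ i.val + 1 + k; omega)
    have hsplit : ∑ t ∈ Finset.Ici i, x t
        = x i + ∑ t ∈ Finset.Ici (⟨i.val + 1, hi'lt⟩ : Fin k), x t := by
      rw [sum_Ici_split]
      congr 1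
      apply Finset.sum_congr _ (fun _ _ => rfl)
      ext t
      simp only [Finset.mem_Ioi, Finset.mem_Ici, Fin.lt_def, Fin.le_def]
      omega
    rw [hsplit, hUi'] at hUi
    rw [← hTval]
    have : Vn a b I (↑(⟨i.val + 1, hi'lt⟩ : Fin k)) = Vn a b I (i.val + 1) := rfl
    rw [this] at hUi
    linarith
end sol

section extreme
variable {k : ℕ} {a b : Fin k → ℝ} (ha : ∀ i, 0 < a i) (hb : ∀ i, 0 < b i)
  (hab : ∀ i j : Fin k, i < j → 0 < a i * b j - a j * b i)

include ha hb hab in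
lemma sol_extreme (I : Finset (Fin k)) :
    solF a b I ∈ Set.extremePoints ℝ (Pab k a b) := by
  rw [mem_extremePoints]
  refine ⟨sol_mem ha hb hab I, fun x1 hx1 x2 hx2 hseg => ?_⟩
  rw [openSegment, Set.mem_setOf_eq] at hseg
  obtain ⟨θ, η, hθ, hη, hsum, heq⟩ := hseg
  have hL1 : ∀ i ∈ I, Lab k a b i x1 = 0 ∧ Lab k a b i x2 = 0 := by
    intro i hi
    have h0 : Lab k a b i (solF a b I) = 0 := sol_Lab_zero ha hb I hi
    rw [← heq, Lab_combo k a b i x1 x2 hsum] at h0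
    have g1 := (hx1 i).2
    have g2 := (hx2 i).2
    constructor <;> nlinarith
  have hZ1 : ∀ j ∉ I, x1 j = 0 ∧ x2 j = 0 := by
    intro j hj
    have h0 : solF a b I j = 0 := sol_zero I hj
    rw [← heq] at h0
    have h0' : θ * x1 j + η * x2 j = 0 := h0
    have g1 := (hx1 j).1
    have g2 := (hx2 j).1
    constructor <;> nlinarith
  exact ⟨sol_unique ha hb I x1 (fun i hi => (hL1 i hi).1) (fun j hj => (hZ1 j hj).1),
    sol_unique ha hb I x2 (fun i hi => (hL1 i hi).2) (fun j hj => (hZ1 j hj).2)⟩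

include ha hb hab in
lemma sol_inj : Function.Injective (solF a b (k := k)) := by
  intro I J hIJ
  ext i
  have key : ∀ K : Finset (Fin k), i ∈ K ↔ Lab k a b i (solF a b K) = 0 := by
    intro K
    constructor
    · exact fun h => sol_Lab_zero ha hb K h
    · intro h
      by_contra hc
      exact absurd h (ne_of_gt (sol_Lab_pos ha hb hab K hc))
  rw [key I, key J, hIJ]

end extreme

open Classical in
noncomputable def lamP (k : ℕ) (p : Fin k → ℝ) (j : Fin k) : ℝ :=
  if (∀ s : Fin k, s < j → p s = 0) then 1 else 0

open Classical in
noncomputable def wbody (k : ℕ) (a b p : Fin k → ℝ) (j : Fin k) (t : Fin k) (prev : ℝ) : ℝ :=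
  if t = j then 1
  else if Lab k a b t p = 0 then cc a b t * lamP k p j
  else if p t = 0 then prev else 0

noncomputable def ww (k : ℕ) (a b p : Fin k → ℝ) (j : Fin k) : ℕ → ℝ
  | 0 => 0
  | (m+1) => if h : m + 1 ≤ k then
      wbody k a b p j ⟨k - (m+1), by omega⟩ (ww k a b p j m)
    else 0

lemma ww_at {k : ℕ} (a b p : Fin k → ℝ) (j t : Fin k) :
    ww k a b p j (k - t.val) = wbody k a b p j t (ww k a b p j (k - t.val - 1)) := by
  have hlt := t.isLt
  have h1 : k - t.val = (k - t.val - 1) + 1 := by omega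
  conv_lhs => rw [h1]
  rw [ww, dif_pos (by omega : k - t.val - 1 + 1 ≤ k)]
  congr 2
  all_goals omega

lemma lamP_cases (k : ℕ) (p : Fin k → ℝ) (j : Fin k) : lamP k p j = 0 ∨ lamP k p j = 1 := by
  rw [lamP]; split
  · right; rfl
  · left; rfl

section classify
variable {k : ℕ} {a b : Fin k → ℝ} (ha : ∀ i, 0 < a i) (hb : ∀ i, 0 < b i)
  (hab : ∀ i j : Fin k, i < j → 0 < a i * b j - a j * b i)

include ha hb in
lemma ww_lt_one (p : Fin k → ℝ) (j : Fin k) :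
    ∀ m : ℕ, j.val + m + 1 ≤ k → ww k a b p j m < 1 := by
  intro m
  induction m with
  | zero => intro _; rw [ww]; norm_num
  | succ m ih =>
    intro hm
    rw [ww, dif_pos (by omega)]
    set t : Fin k := ⟨k - (m+1), by omega⟩ with ht
    have htj : t ≠ j := by
      intro h
      have : t.val = j.val := by rw [h]
      simp only [ht, Fin.val_mk] at this
      omega
    rw [wbody, if_neg htj]
    split
    · rcases lamP_cases k p j with h | h <;> rw [h]
      · simp
      · rw [mul_one]; exact cc_lt_one ha hb t
    · split
      · exact ih (by omega)
      · norm_num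

include ha hb hab in
lemma cap_active_pos (x : Fin k → ℝ) (hx : x ∈ Pab k a b) {i : Fin k}
    (hLi : Lab k a b i x = 0) : 0 < x i := by
  have hT : 0 ≤ ∑ t, x t := Finset.sum_nonneg fun t _ => (hx t).1
  have hLe := Lab_eq k a b i x
  rw [hLi] at hLe
  have h2 := ha i; have h3 := hb i
  by_cases hlast : i.val + 1 = k
  · have he : Finset.Ici i = {i} := by
      ext t
      simp only [Finset.mem_Ici, Finset.mem_singleton, Fin.le_def]
      have := t.isLt
      constructor
      · intro h; exact Fin.ext (by omega)
      · intro h; rw [h]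
    rw [he, Finset.sum_singleton] at hLe
    nlinarith
  · have hi'lt : i.val + 1 < k := by have := i.isLt; omega
    set i' : Fin k := ⟨i.val + 1, hi'lt⟩ with hi'
    have hii' : i < i' := by rw [Fin.lt_def]; simp [hi']
    have h4 := ha i'; have h5 := hb i'
    have h6 := hab i i' hii'
    have hL' := (hx i').2
    rw [Lab_eq] at hL'
    have hU' : 0 ≤ ∑ t ∈ Finset.Ici i', x t :=
      Finset.sum_nonneg fun t _ => (hx t).1
    have hsplit : ∑ t ∈ Finset.Ici i, x t = x i + ∑ t ∈ Finset.Ici i', x t := by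
      rw [sum_Ici_split]
      congr 1
      apply Finset.sum_congr _ (fun _ _ => rfl)
      ext t
      simp only [Finset.mem_Ioi, Finset.mem_Ici, Fin.lt_def, Fin.le_def, hi']
      omega
    rw [hsplit] at hLe
    have hTp : (0:ℝ) < 1 + ∑ t, x t := by linarith
    nlinarith [mul_le_mul_of_nonneg_left hL' (by positivity : (0:ℝ) ≤ a i + b i),
      mul_pos h6 hTp, mul_pos (by linarith : (0:ℝ) < a i + b i) (by linarith : (0:ℝ) < a i' + b i')]

include ha hb hab in
lemma block_slack (x : Fin k → ℝ) (hx : x ∈ Pab k a b) {i j : Fin k} (hij : i < j)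
    (hz : ∀ s : Fin k, i ≤ s → s < j → x s = 0) (hLj : Lab k a b j x ≠ 0) :
    Lab k a b i x ≠ 0 := by
  intro hLi
  have hT : 0 ≤ ∑ t, x t := Finset.sum_nonneg fun t _ => (hx t).1
  have hUij : ∑ t ∈ Finset.Ici i, x t = ∑ t ∈ Finset.Ici j, x t := by
    have hsub : Finset.Ici j ⊆ Finset.Ici i :=
      Finset.Ici_subset_Ici.2 (le_of_lt hij)
    have := Finset.sum_sdiff (f := x) hsub
    have hzero : ∑ t ∈ Finset.Ici i \ Finset.Ici j, x t = 0 := by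
      apply Finset.sum_eq_zero
      intro t ht
      rw [Finset.mem_sdiff, Finset.mem_Ici, Finset.mem_Ici] at ht
      exact hz t ht.1 (by have := ht.2; rw [Fin.lt_def]; rw [Fin.le_def] at this; omega)
    linarith [this, hzero]
  have hLe := Lab_eq k a b i x
  rw [hLi] at hLe
  have hLj' := (hx j).2
  have hLjs : 0 < Lab k a b j x := lt_of_le_of_ne hLj' (Ne.symm hLj)
  rw [Lab_eq] at hLjs
  rw [hUij] at hLe
  have h2 := ha i; have h3 := hb i; have h4 := ha j; have h5 := hb j
  have h6 := hab i j hij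
  nlinarith

include ha hb hab in
lemma ww_top (p : Fin k → ℝ) (hp : p ∈ Pab k a b) (j : Fin k)
    (hLj : Lab k a b j p ≠ 0) : ww k a b p j k = lamP k p j := by
  have hk0 : 0 < k := j.pos
  by_cases hall : ∀ s : Fin k, s < j → p s = 0
  · have hlam : lamP k p j = 1 := by rw [lamP, if_pos hall]
    rw [hlam]
    have claim : ∀ n : ℕ, ∀ i : Fin k, i ≤ j → j.val - i.val ≤ n →
        ww k a b p j (k - i.val) = 1 := by
      intro n
      induction n with
      | zero =>
        intro i hij hn
        have : i = j := Fin.ext (by rw [Fin.le_def] at hij; omega)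
        subst this
        rw [ww_at, wbody, if_pos rfl]
      | succ n ih =>
        intro i hij hn
        by_cases hij' : i = j
        · subst hij'; rw [ww_at, wbody, if_pos rfl]
        · have hlt : i < j := lt_of_le_of_ne hij hij'
          have hLi : Lab k a b i p ≠ 0 :=
            block_slack ha hb hab p hp hlt (fun s _ hs => hall s hs) hLj
          rw [ww_at, wbody, if_neg hij', if_neg hLi, if_pos (hall i hlt)]
          have hi'lt : i.val + 1 < k := by
            have := j.isLt; rw [Fin.lt_def] at hlt; omega
          have hrw : k - i.val - 1 = k - (⟨i.val + 1, hi'lt⟩ : Fin k).val := by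
            simp only [Fin.val_mk]; omega
          rw [hrw]
          apply ih ⟨i.val + 1, hi'lt⟩
          · rw [Fin.le_def]; simp only [Fin.val_mk]; rw [Fin.lt_def] at hlt; omega
          · simp only [Fin.val_mk]; omega
    have h0 := claim j.val ⟨0, hk0⟩ (by rw [Fin.le_def]; simp) (by simp)
    simpa using h0
  · have hlam : lamP k p j = 0 := by rw [lamP, if_neg hall]
    rw [hlam]
    push_neg at hall
    obtain ⟨s0, hs0j, hs0⟩ := hall
    have claim : ∀ n : ℕ, ∀ i : Fin k, (∃ s : Fin k, i ≤ s ∧ s < j ∧ p s ≠ 0) →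
        j.val - i.val ≤ n → ww k a b p j (k - i.val) = 0 := by
      intro n
      induction n with
      | zero =>
        intro i ⟨s, his, hsj, _⟩ hn
        exfalso
        rw [Fin.le_def] at his; rw [Fin.lt_def] at hsj; omega
      | succ n ih =>
        intro i ⟨s, his, hsj, hps⟩ hn
        have hij : i < j := lt_of_le_of_lt (Fin.le_def.2 (Fin.le_def.1 his)) hsj
        have hij' : i ≠ j := ne_of_lt hij
        rw [ww_at, wbody, if_neg hij']
        split
        · rw [hlam, mul_zero]
        · split
          · rename_i hpi
            have his' : i ≠ s := by intro h; rw [h] at hpi; exact hps hpi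
            have hilt : i.val < s.val := by
              rw [Fin.le_def] at his
              rcases Nat.eq_or_lt_of_le his with h | h
              · exact absurd (Fin.ext h) his'
              · exact h
            have hi'lt : i.val + 1 < k := lt_of_le_of_lt hilt s.isLt
            have hrw : k - i.val - 1 = k - (⟨i.val + 1, hi'lt⟩ : Fin k).val := by
              simp only [Fin.val_mk]; omega
            rw [hrw]
            apply ih ⟨i.val + 1, hi'lt⟩ ⟨s, by rw [Fin.le_def]; simpa using hilt, hsj, hps⟩
            simp only [Fin.val_mk]; rw [Fin.lt_def] at hij; omega
          · rfl
    have h0 := claim j.val ⟨0, hk0⟩ ⟨s0, by rw [Fin.le_def]; simp, hs0j, hs0⟩ (by simp)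
    simpa using h0

lemma U_d (p : Fin k → ℝ) (j : Fin k) (i : Fin k) :
    ∑ t ∈ Finset.Ici i, (ww k a b p j (k - t.val) - ww k a b p j (k - t.val - 1))
      = ww k a b p j (k - i.val) := by
  have h1 := sum_val_Ici i (fun n => ww k a b p j (k - n) - ww k a b p j (k - n - 1))
  rw [h1]
  have h2 : ∀ n, ww k a b p j (k - n) - ww k a b p j (k - n - 1)
      = (fun n => ww k a b p j (k - n)) n - (fun n => ww k a b p j (k - n)) (n+1) := by
    intro n
    simp only
    have h3 : k - n - 1 = k - (n+1) := by omega
    rw [h3]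
  rw [Finset.sum_congr rfl (fun n _ => h2 n),
    sum_Ico_tele (fun n => ww k a b p j (k - n)) (le_of_lt i.isLt)]
  simp only [Nat.sub_self, ww, sub_zero]

include ha hb hab in
lemma extreme_eq_sol {p : Fin k → ℝ} (hp : p ∈ Set.extremePoints ℝ (Pab k a b)) :
    ∃ I : Finset (Fin k), p = solF a b I := by
  classical
  have hpP : p ∈ Pab k a b := hp.1
  set I : Finset (Fin k) := Finset.univ.filter (fun i => Lab k a b i p = 0) with hI
  have h1 : ∀ i ∈ I, Lab k a b i p = 0 := by
    intro i hi; rw [hI, Finset.mem_filter] at hi; exact hi.2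
  suffices h2 : ∀ j ∉ I, p j = 0 by
    exact ⟨I, sol_unique ha hb I p h1 h2⟩
  intro j hjI
  by_contra hpj
  have hLj : Lab k a b j p ≠ 0 := by
    intro h; apply hjI; rw [hI, Finset.mem_filter]; exact ⟨Finset.mem_univ j, h⟩
  have hk0 : 0 < k := j.pos
  set W := ww k a b p j with hW
  set lam := lamP k p j with hlam
  set d : Fin k → ℝ := fun t => W (k - t.val) - W (k - t.val - 1) with hd
  have hUd : ∀ i : Fin k, ∑ t ∈ Finset.Ici i, d t = W (k - i.val) := fun i => U_d p j i
  have hTd : ∑ t, d t = lam := by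
    have huniv : Finset.Ici (⟨0, hk0⟩ : Fin k) = Finset.univ := by
      ext t; simp [Fin.le_def]
    have h := hUd ⟨0, hk0⟩
    rw [huniv] at h
    rw [h]
    show W (k - 0) = lam
    rw [Nat.sub_zero]
    exact ww_top ha hb hab p hpP j hLj
  have hd0 : ∀ t : Fin k, p t = 0 → d t = 0 := by
    intro t hpt
    have htj : t ≠ j := by intro h; rw [h] at hpt; exact hpj hpt
    have hLt : Lab k a b t p ≠ 0 := by
      intro h
      have h5 := cap_active_pos ha hb hab p hpP h
      rw [hpt] at h5
      exact lt_irrefl 0 h5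
    show W (k - t.val) - W (k - t.val - 1) = 0
    rw [hW, ww_at, wbody, if_neg htj, if_neg hLt, if_pos hpt, sub_self]
  have hL0 : ∀ t : Fin k, Lab k a b t p = 0 →
      a t * (∑ s, d s) - (a t + b t) * ∑ s ∈ Finset.Ici t, d s = 0 := by
    intro t hLt
    have htj : t ≠ j := by intro h; rw [h] at hLt; exact hLj hLt
    rw [hTd, hUd]
    have hWt : W (k - t.val) = cc a b t * lam := by
      rw [hW, ww_at, wbody, if_neg htj, if_pos hLt]
    rw [hWt, cc]
    have h2 := ha t; have h3 := hb t
    have h4 : a t + b t ≠ 0 := by linarith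
    field_simp
    ring
  set S : Fin k → ℝ := fun t =>
    min (if p t = 0 then 1 else p t / (|d t| + 1))
      (if Lab k a b t p = 0 then 1
       else Lab k a b t p / (|a t * (∑ s, d s) - (a t + b t) * ∑ s ∈ Finset.Ici t, d s| + 1))
    with hS
  set ε : ℝ := Finset.univ.inf' ⟨j, Finset.mem_univ j⟩ S with hε
  have hεpos : 0 < ε := by
    rw [hε]; apply (Finset.lt_inf'_iff _).2
    intro t _
    rw [hS]
    apply lt_min
    · split
      · norm_num
      · rename_i h
        have h6 := (hpP t).1
        have hpt : 0 < p t := lt_of_le_of_ne h6 (Ne.symm h)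
        positivity
    · split
      · norm_num
      · rename_i h
        have h6 := (hpP t).2
        have hpt : 0 < Lab k a b t p := lt_of_le_of_ne h6 (Ne.symm h)
        positivity
  have hmem : ∀ e : ℝ, |e| ≤ ε → p + e • d ∈ Pab k a b := by
    intro e he t
    have hεS : ε ≤ S t := Finset.inf'_le _ (Finset.mem_univ t)
    constructor
    · show 0 ≤ p t + e * d t
      by_cases hpt : p t = 0
      · rw [hpt, hd0 t hpt, mul_zero, add_zero]
      · have hp1 : 0 < p t := lt_of_le_of_ne (hpP t).1 (Ne.symm hpt)
        have hb1 : ε ≤ p t / (|d t| + 1) := by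
          refine hεS.trans ?_
          rw [hS]
          exact (min_le_left _ _).trans_eq (by rw [if_neg hpt])
        have habs : |e * d t| ≤ p t := by
          rw [abs_mul]
          calc |e| * |d t| ≤ ε * |d t| :=
                mul_le_mul_of_nonneg_right he (abs_nonneg _)
            _ ≤ (p t / (|d t| + 1)) * |d t| :=
                mul_le_mul_of_nonneg_right hb1 (abs_nonneg _)
            _ ≤ p t := by
                rw [div_mul_eq_mul_div, div_le_iff₀ (by positivity)]
                nlinarith [abs_nonneg (d t)]
        have h7 := neg_abs_le (e * d t)
        linarith
    · rw [Lab_add_smul]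
      by_cases hLt : Lab k a b t p = 0
      · rw [hLt, hL0 t hLt, mul_zero, add_zero]
      · have hp1 : 0 < Lab k a b t p := lt_of_le_of_ne (hpP t).2 (Ne.symm hLt)
        set G : ℝ := a t * (∑ s, d s) - (a t + b t) * ∑ s ∈ Finset.Ici t, d s with hG
        have hb1 : ε ≤ Lab k a b t p / (|G| + 1) := by
          refine hεS.trans ?_
          rw [hS]
          exact (min_le_right _ _).trans_eq (by rw [if_neg hLt])
        have habs : |e * G| ≤ Lab k a b t p := by
          rw [abs_mul]
          calc |e| * |G| ≤ ε * |G| :=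
                mul_le_mul_of_nonneg_right he (abs_nonneg _)
            _ ≤ (Lab k a b t p / (|G| + 1)) * |G| :=
                mul_le_mul_of_nonneg_right hb1 (abs_nonneg _)
            _ ≤ Lab k a b t p := by
                rw [div_mul_eq_mul_div, div_le_iff₀ (by positivity)]
                nlinarith [abs_nonneg G]
        have h7 := neg_abs_le (e * G)
        linarith
  have hx1 : p + ε • d ∈ Pab k a b := hmem ε (by rw [abs_of_pos hεpos])
  have hx2 : p + (-ε) • d ∈ Pab k a b := hmem (-ε) (by rw [abs_neg, abs_of_pos hεpos])
  have hseg : p ∈ openSegment ℝ (p + ε • d) (p + (-ε) • d) := by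
    rw [openSegment, Set.mem_setOf_eq]
    refine ⟨1/2, 1/2, by norm_num, by norm_num, by norm_num, ?_⟩
    funext t
    simp only [Pi.add_apply, Pi.smul_apply, smul_eq_mul]
    ring
  obtain ⟨heq1, -⟩ := (mem_extremePoints.1 hp).2 _ hx1 _ hx2 hseg
  have hdj0 : d j = 0 := by
    have h8 := congrFun heq1 j
    simp only [Pi.add_apply, Pi.smul_apply, smul_eq_mul] at h8
    have h9 : ε * d j = 0 := by linarith
    rcases mul_eq_zero.1 h9 with h | h
    · exact absurd h (ne_of_gt hεpos)
    · exact h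
  have hWj : W (k - j.val) = 1 := by rw [hW, ww_at, wbody, if_pos rfl]
  have hWj1 : W (k - j.val - 1) < 1 := by
    rw [hW]
    apply ww_lt_one ha hb p j
    have := j.isLt; omega
  have hdjv : d j = W (k - j.val) - W (k - j.val - 1) := rfl
  rw [hdjv, hWj] at hdj0
  linarith

end classify

section topol
variable {k : ℕ} {a b : Fin k → ℝ} (ha : ∀ i, 0 < a i) (hb : ∀ i, 0 < b i)

lemma Pab_convex : Convex ℝ (Pab k a b) := by
  intro x hx y hy θ η hθ hη hsum
  intro i
  constructor
  · show 0 ≤ θ * x i + η * y i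
    exact add_nonneg (mul_nonneg hθ (hx i).1) (mul_nonneg hη (hy i).1)
  · rw [Lab_combo k a b i x y hsum]
    exact add_nonneg (mul_nonneg hθ (hx i).2) (mul_nonneg hη (hy i).2)

include ha hb in
lemma Pab_bounded : Bornology.IsBounded (Pab k a b) := by
  rw [isBounded_iff_forall_norm_le]
  refine ⟨∑ i, a i / b i, fun x hx => ?_⟩
  have hC : (0:ℝ) ≤ ∑ i, a i / b i :=
    Finset.sum_nonneg fun i _ => le_of_lt (div_pos (ha i) (hb i))
  rw [pi_norm_le_iff_of_nonneg hC]
  intro i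
  have hk0 : 0 < k := i.pos
  set i0 : Fin k := ⟨0, hk0⟩ with hi0
  have huniv : Finset.Ici i0 = Finset.univ := by
    ext t; simp [Fin.le_def, hi0]
  have hL := (hx i0).2
  rw [Lab_eq, huniv] at hL
  have hT : 0 ≤ ∑ t, x t := Finset.sum_nonneg fun t _ => (hx t).1
  have h2 := ha i0; have h3 := hb i0
  have hTle : ∑ t, x t ≤ a i0 / b i0 := by
    rw [le_div_iff₀ h3]
    nlinarith
  have hxi : x i ≤ ∑ t, x t :=
    Finset.single_le_sum (fun t _ => (hx t).1) (Finset.mem_univ i)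
  have hfin : a i0 / b i0 ≤ ∑ t, a t / b t :=
    Finset.single_le_sum (fun t _ => le_of_lt (div_pos (ha t) (hb t))) (Finset.mem_univ i0)
  rw [Real.norm_eq_abs, abs_of_nonneg (hx i).1]
  linarith

include ha hb in
lemma Pab_interior : (interior (Pab k a b)).Nonempty := by
  by_cases hk : k = 0
  · subst hk
    have hP : Pab 0 a b = Set.univ := by
      rw [Set.eq_univ_iff_forall]
      intro x i
      exact i.elim0
    rw [hP, interior_univ]
    exact ⟨fun i => 0, Set.mem_univ _⟩
  · have hk0 : 0 < k := Nat.pos_of_ne_zero hk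
    have hne : (Finset.univ : Finset (Fin k)).Nonempty := ⟨⟨0, hk0⟩, Finset.mem_univ _⟩
    set ε : ℝ := Finset.univ.inf' hne (fun i => a i / ((a i + b i) * k + 1)) with hε
    have hεpos : 0 < ε := by
      rw [hε, Finset.lt_inf'_iff]
      intro i _
      have := ha i; have := hb i
      positivity
    set O : Set (Fin k → ℝ) := {x | ∀ i, 0 < x i ∧ 0 < Lab k a b i x} with hO
    have hOopen : IsOpen O := by
      have hOeq : O = ⋂ i, ({x : Fin k → ℝ | 0 < x i} ∩ {x | 0 < Lab k a b i x}) := by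
        ext x
        simp only [hO, Set.mem_setOf_eq, Set.mem_iInter, Set.mem_inter_iff]
      rw [hOeq]
      apply isOpen_iInter_of_finite
      intro i
      apply IsOpen.inter
      · exact isOpen_lt continuous_const (continuous_apply i)
      · refine isOpen_lt continuous_const ?_
        unfold Lab
        exact ((continuous_const.add (continuous_const.mul
          (continuous_finset_sum _ fun t _ => continuous_apply t))).sub
          (continuous_const.mul (continuous_finset_sum _ fun t _ => continuous_apply t)))
    have hOsub : O ⊆ Pab k a b := by
      intro x hxO i
      exact ⟨le_of_lt (hxO i).1, le_of_lt (hxO i).2⟩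
    have hwO : (fun _ : Fin k => ε) ∈ O := by
      intro i
      refine ⟨hεpos, ?_⟩
      rw [Lab]
      rw [Finset.sum_const, Finset.sum_const, nsmul_eq_mul, nsmul_eq_mul]
      have e1 : ε * ((a i + b i) * k + 1) ≤ a i := by
        have h5 : ε ≤ a i / ((a i + b i) * k + 1) :=
          Finset.inf'_le _ (Finset.mem_univ i)
        have h6 : (0:ℝ) < (a i + b i) * k + 1 := by
          have := ha i; have := hb i
          positivity
        rw [← le_div_iff₀ h6]
        exact h5
      have e2 : ((Finset.Ici i).card : ℝ) ≤ k := by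
        have h7 := Finset.card_le_univ (Finset.Ici i)
        rw [Fintype.card_fin] at h7
        exact_mod_cast h7
      have e3 : (0:ℝ) ≤ ((Finset.Iio i).card : ℝ) := Nat.cast_nonneg _
      have h2 := ha i; have h3 := hb i
      nlinarith [mul_le_mul_of_nonneg_right
          (mul_le_mul_of_nonneg_left e2 (le_of_lt h3)) (le_of_lt hεpos),
        mul_nonneg (mul_nonneg (le_of_lt h2) e3) (le_of_lt hεpos),
        mul_pos h2 hεpos]
    exact ⟨_, interior_maximal hOsub hOopen hwO⟩

end topol

end PabAux


/-- Under the hypotheses `a_i, b_i > 0` and `a_i b_j - a_j b_i > 0`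
for `i < j`, the set `P` is a bounded convex set with nonempty interior; for each
subset `I ⊆ {1,…,k}` the system `{L_i x = 0 (i ∈ I), x_j = 0 (j ∉ I)}` has a unique
solution, which lies in `P` and is an extreme point of `P`; these `2^k` solutions are
pairwise distinct and are exactly the extreme points of `P`. -/
theorem Pab_polytope (k : ℕ) (a b : Fin k → ℝ)
    (ha : ∀ i, 0 < a i) (hb : ∀ i, 0 < b i)
    (hab : ∀ i j : Fin k, i < j → 0 < a i * b j - a j * b i) :
    Bornology.IsBounded (Pab k a b) ∧ Convex ℝ (Pab k a b) ∧
    (interior (Pab k a b)).Nonempty ∧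
    ∃ sol : Finset (Fin k) → (Fin k → ℝ),
      (∀ I : Finset (Fin k),
        (∀ i ∈ I, Lab k a b i (sol I) = 0) ∧ (∀ j ∉ I, sol I j = 0) ∧
        (∀ x : Fin k → ℝ, (∀ i ∈ I, Lab k a b i x = 0) → (∀ j ∉ I, x j = 0) → x = sol I) ∧
        sol I ∈ Pab k a b ∧ sol I ∈ Set.extremePoints ℝ (Pab k a b)) ∧
      Function.Injective sol ∧
      Set.extremePoints ℝ (Pab k a b) = Set.range sol := by
  refine ⟨PabAux.Pab_bounded ha hb, PabAux.Pab_convex, PabAux.Pab_interior ha hb,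
    PabAux.solF a b, fun I => ⟨fun i hi => PabAux.sol_Lab_zero ha hb I hi,
      fun j hj => PabAux.sol_zero I hj,
      fun x hx1 hx2 => PabAux.sol_unique ha hb I x hx1 hx2,
      PabAux.sol_mem ha hb hab I, PabAux.sol_extreme ha hb hab I⟩,
    PabAux.sol_inj ha hb hab, ?_⟩
  ext p
  constructor
  · intro hp
    obtain ⟨I, hI⟩ := PabAux.extreme_eq_sol ha hb hab hp
    exact ⟨I, hI.symm⟩
  · rintro ⟨I, rfl⟩
    exact PabAux.sol_extreme ha hb hab I
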